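/- arXiv:1606.05622 — 3 statements merged into one kernel-verified Lean document; each statement's English description precedes it below -/
import Mathlib

section
/- For every mass ratio μ with 0 < μ < 1/2, set l = (1 − 2√(μ(1−μ)))/(2(1−2μ)). A point (q, p) ∈ (ℝ² ∖ {E, M}) × ℝ² is a critical point of the Hamiltonian H_μ(q,p) = |p|²/2 − (1−μ)/‖q−E‖ − μ/‖q−M‖ (i.e., the Fréchet derivative of H_μ at (q,p) vanishes) if and only if p = 0 and q = (l, 0). -/
/-- The position of the Earth: E = (-1/2, 0). -/
noncomputable def Earth : EuclideanSpace ℝ (Fin 2) := !₂[-(1/2 : ℝ), 0]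

/-- The position of the Moon: M = (1/2, 0). -/
noncomputable def Moon : EuclideanSpace ℝ (Fin 2) := !₂[(1/2 : ℝ), 0]

/-- The Hamiltonian of the Euler problem of two fixed centers:
H_μ(q,p) = |p|²/2 - (1-μ)/‖q-E‖ - μ/‖q-M‖. -/
noncomputable def eulerHamiltonian (μ : ℝ)
    (x : EuclideanSpace ℝ (Fin 2) × EuclideanSpace ℝ (Fin 2)) : ℝ :=
  ‖x.2‖ ^ 2 / 2 - (1 - μ) / ‖x.1 - Earth‖ - μ / ‖x.1 - Moon‖

open ContinuousLinearMap in
lemma hasFDerivAt_inv_norm_sub (a x : EuclideanSpace ℝ (Fin 2)) (h : x ≠ a) :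
    HasFDerivAt (fun y => ‖y - a‖⁻¹) ((-(‖x - a‖ ^ 3)⁻¹) • innerSL ℝ (x - a)) x := by
  have hx : x - a ≠ 0 := sub_ne_zero.mpr h
  have hn : (0:ℝ) < ‖x - a‖ := norm_pos_iff.mpr hx
  have h1 : HasFDerivAt (fun y : EuclideanSpace ℝ (Fin 2) => y - a)
      (ContinuousLinearMap.id ℝ _) x := (hasFDerivAt_id x).sub_const a
  have h2 := h1.norm_sq
  have ht : (0:ℝ) < ‖x - a‖ ^ 2 := by positivity
  have h3 : HasDerivAt (fun t : ℝ => (Real.sqrt t)⁻¹)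
      (-(1 / (2 * Real.sqrt (‖x - a‖ ^ 2))) / (Real.sqrt (‖x - a‖ ^ 2)) ^ 2)
      (‖x - a‖ ^ 2) :=
    (Real.hasDerivAt_sqrt ht.ne').inv (by
      rw [Real.sqrt_sq hn.le]; exact hn.ne')
  have h4 := h3.comp_hasFDerivAt x h2
  have hfun : (fun y : EuclideanSpace ℝ (Fin 2) => (Real.sqrt (‖y - a‖ ^ 2))⁻¹)
      = fun y => ‖y - a‖⁻¹ := by
    funext y; rw [Real.sqrt_sq (norm_nonneg _)]
  rw [Function.comp_def, hfun] at h4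
  refine h4.congr_fderiv (Eq.symm ?_)
  rw [Real.sqrt_sq hn.le]
  ext v
  simp only [ContinuousLinearMap.smul_apply, innerSL_apply_apply, ContinuousLinearMap.comp_apply,
    ContinuousLinearMap.coe_id', id_eq, smul_eq_mul, ContinuousLinearMap.coe_smul',
    Pi.smul_apply, two_smul, ContinuousLinearMap.add_apply]
  field_simp
  ring

open ContinuousLinearMap in
lemma hasFDerivAt_euler (μ : ℝ) (q p : EuclideanSpace ℝ (Fin 2))
    (hE : q ≠ Earth) (hM : q ≠ Moon) :
    HasFDerivAt (eulerHamiltonian μ)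
      ((innerSL ℝ p).comp (snd ℝ (EuclideanSpace ℝ (Fin 2)) (EuclideanSpace ℝ (Fin 2))) +
        (innerSL ℝ (((1 - μ) * (‖q - Earth‖ ^ 3)⁻¹) • (q - Earth) +
          (μ * (‖q - Moon‖ ^ 3)⁻¹) • (q - Moon))).comp
          (fst ℝ (EuclideanSpace ℝ (Fin 2)) (EuclideanSpace ℝ (Fin 2)))) (q, p) := by
  have hfun : eulerHamiltonian μ = fun x : EuclideanSpace ℝ (Fin 2) × EuclideanSpace ℝ (Fin 2) =>
      (2:ℝ)⁻¹ * ‖x.2‖ ^ 2 - (1 - μ) * ((fun y => ‖y - Earth‖⁻¹) ∘ Prod.fst) x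
        - μ * ((fun y => ‖y - Moon‖⁻¹) ∘ Prod.fst) x := by
    funext x; simp [eulerHamiltonian, div_eq_mul_inv, Function.comp]; ring
  have h2 := ((hasFDerivAt_inv_norm_sub Earth q hE).comp (q, p)
    (hasFDerivAt_fst (𝕜 := ℝ) (p := (q, p)))).const_mul (1 - μ)
  have h3 := ((hasFDerivAt_inv_norm_sub Moon q hM).comp (q, p)
    (hasFDerivAt_fst (𝕜 := ℝ) (p := (q, p)))).const_mul μ
  have h1 := (hasFDerivAt_snd (p := (q, p))).norm_sq.const_mul (2:ℝ)⁻¹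
  have H := (h1.sub h2).sub h3
  rw [hfun]
  refine H.congr_fderiv (Eq.symm ?_)
  refine ContinuousLinearMap.ext fun v => ?_
  obtain ⟨v, w⟩ := v
  simp only [ContinuousLinearMap.add_apply, ContinuousLinearMap.comp_apply,
    ContinuousLinearMap.coe_fst', ContinuousLinearMap.coe_snd', innerSL_apply_apply,
    ContinuousLinearMap.sub_apply, ContinuousLinearMap.smul_apply, smul_eq_mul,
    ContinuousLinearMap.coe_smul', Pi.smul_apply, two_smul,
    inner_add_left, real_inner_smul_left]
  ring

lemma norm_sub_earth (q : EuclideanSpace ℝ (Fin 2)) (h : q 1 = 0) :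
    ‖q - Earth‖ = |q 0 + 1/2| := by
  rw [EuclideanSpace.norm_eq, Fin.sum_univ_two]
  simp [Earth, h, Real.sqrt_sq_eq_abs, sub_neg_eq_add]

lemma norm_sub_moon (q : EuclideanSpace ℝ (Fin 2)) (h : q 1 = 0) :
    ‖q - Moon‖ = |q 0 - 1/2| := by
  rw [EuclideanSpace.norm_eq, Fin.sum_univ_two]
  simp [Moon, h, Real.sqrt_sq_eq_abs]

lemma eq_pt (q : EuclideanSpace ℝ (Fin 2)) (a b : ℝ) (h0 : q 0 = a) (h1 : q 1 = b) :
    q = ![a, b] := by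
  funext i; fin_cases i <;> simpa

lemma eq_zero_iff2 (v : EuclideanSpace ℝ (Fin 2)) : v = 0 ↔ v 0 = 0 ∧ v 1 = 0 := by
  constructor
  · intro h; rw [h]; exact ⟨rfl, rfl⟩
  · rintro ⟨h0, h1⟩; ext i; fin_cases i <;> simpa


set_option maxHeartbeats 2000000 in
/-- For 0 < μ < 1/2 and l = (1 - 2√(μ(1-μ)))/(2(1-2μ)), a point (q,p) with
q ∉ {E, M} is a critical point of the Hamiltonian H_μ iff p = 0 and q = (l,0). -/
theorem euler_hamiltonian_critical_point (μ : ℝ) (hμ0 : 0 < μ) (hμ1 : μ < 1/2)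
    (l : ℝ) (hl : l = (1 - 2 * Real.sqrt (μ * (1 - μ))) / (2 * (1 - 2 * μ))) :
    ∀ q p : EuclideanSpace ℝ (Fin 2), q ≠ Earth → q ≠ Moon →
      (fderiv ℝ (eulerHamiltonian μ) (q, p) = 0 ↔ p = 0 ∧ q = ![l, 0]) := by
  -- basic scalar facts
  set s := Real.sqrt (1 - μ) with hs_def
  set t := Real.sqrt μ with ht_def
  have hμ1' : μ < 1 := by linarith
  have hs2 : s ^ 2 = 1 - μ := Real.sq_sqrt (by linarith)
  have ht2 : t ^ 2 = μ := Real.sq_sqrt hμ0.le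
  have hs0 : 0 < s := Real.sqrt_pos.mpr (by linarith)
  have ht0 : 0 < t := Real.sqrt_pos.mpr hμ0
  have hts : t < s := by nlinarith [hs2, ht2, hs0, ht0]
  have hl' : l = (s - t) / (2 * (s + t)) := by
    have h1 : Real.sqrt (μ * (1 - μ)) = t * s := Real.sqrt_mul hμ0.le _
    have h2 : 1 - 2 * (t * s) = (s - t) ^ 2 := by nlinarith
    have h3 : 1 - 2 * μ = (s + t) * (s - t) := by nlinarith
    rw [hl, h1, h2, h3, div_eq_div_iff (ne_of_gt (by nlinarith)) (ne_of_gt (by positivity))]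
    ring
  have hla : l + 1/2 = s / (s + t) := by
    rw [hl']; field_simp; ring
  have hlb : l - 1/2 = -(t / (s + t)) := by
    rw [hl']; field_simp; ring
  intro q p hE hM
  have hL := hasFDerivAt_euler μ q p hE hM
  rw [hL.fderiv]
  set r1 := ‖q - Earth‖ with hr1_def
  set r2 := ‖q - Moon‖ with hr2_def
  set g : EuclideanSpace ℝ (Fin 2) :=
    ((1 - μ) * (r1 ^ 3)⁻¹) • (q - Earth) + (μ * (r2 ^ 3)⁻¹) • (q - Moon) with hg_def
  have hrE : (0:ℝ) < r1 := norm_pos_iff.mpr (sub_ne_zero.mpr hE)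
  have hrM : (0:ℝ) < r2 := norm_pos_iff.mpr (sub_ne_zero.mpr hM)
  have c1pos : (0:ℝ) < (1 - μ) * (r1 ^ 3)⁻¹ := by
    apply mul_pos (by linarith); positivity
  have c2pos : (0:ℝ) < μ * (r2 ^ 3)⁻¹ := by
    apply mul_pos hμ0; positivity
  have hgapp : ∀ i : Fin 2,
      g i = (1 - μ) * (r1 ^ 3)⁻¹ * (q i - Earth i) + μ * (r2 ^ 3)⁻¹ * (q i - Moon i) := by
    intro i; rfl
  have hE0 : Earth 0 = -(1/2 : ℝ) := rfl
  have hE1 : Earth 1 = (0 : ℝ) := rfl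
  have hM0 : Moon 0 = (1/2 : ℝ) := rfl
  have hM1 : Moon 1 = (0 : ℝ) := rfl
  constructor
  · intro h0
    have hp : p = 0 := by
      have h := congrFun (congrArg DFunLike.coe h0) (0, p)
      simp only [ContinuousLinearMap.add_apply, ContinuousLinearMap.comp_apply,
        ContinuousLinearMap.coe_fst', ContinuousLinearMap.coe_snd', innerSL_apply_apply,
        ContinuousLinearMap.zero_apply, inner_zero_right] at h
      rw [← inner_self_eq_zero (𝕜 := ℝ) (x := p)]
      simpa using h
    have hg : g = 0 := by
      have h := congrFun (congrArg DFunLike.coe h0) (g, 0)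
      simp only [ContinuousLinearMap.add_apply, ContinuousLinearMap.comp_apply,
        ContinuousLinearMap.coe_fst', ContinuousLinearMap.coe_snd', innerSL_apply_apply,
        ContinuousLinearMap.zero_apply, inner_zero_right] at h
      rw [← inner_self_eq_zero (𝕜 := ℝ) (x := g)]
      simpa using h
    obtain ⟨hg0, hg1⟩ := (eq_zero_iff2 g).mp hg
    rw [hgapp 0, hE0, hM0] at hg0
    rw [hgapp 1, hE1, hM1, sub_zero] at hg1
    -- y = 0
    have hy : q 1 = 0 := by nlinarith [hg1, c1pos, c2pos]
    set x := q 0 with hx_def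
    have ha : x + 1/2 ≠ 0 := fun h' => hE (by
      apply WithLp.ofLp_injective
      exact eq_pt q _ _ (by linarith) hy)
    have hb : x - 1/2 ≠ 0 := fun h' => hM (by
      apply WithLp.ofLp_injective
      exact eq_pt q _ _ (by linarith) hy)
    have hrE' : r1 = |x + 1/2| := norm_sub_earth q hy
    have hrM' : r2 = |x - 1/2| := norm_sub_moon q hy
    have h0' : (1 - μ) * (|x + 1/2| ^ 3)⁻¹ * (x + 1/2)
        + μ * (|x - 1/2| ^ 3)⁻¹ * (x - 1/2) = 0 := by
      rw [← hrE', ← hrM']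
      convert hg0 using 3 <;> ring
    have hxl : x = l := by
      rcases lt_trichotomy (x + 1/2) 0 with hA | hA | hA
      · exfalso
        have hB : x - 1/2 < 0 := by linarith
        rw [abs_of_neg hA, abs_of_neg hB] at h0'
        have hA3 : (0:ℝ) < ((-(x + 1/2)) ^ 3)⁻¹ :=
          inv_pos.mpr (pow_pos (by linarith) 3)
        have hB3 : (0:ℝ) < ((-(x - 1/2)) ^ 3)⁻¹ :=
          inv_pos.mpr (pow_pos (by linarith) 3)
        have t1 : (1 - μ) * ((-(x + 1/2)) ^ 3)⁻¹ * (x + 1/2) < 0 :=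
          mul_neg_of_pos_of_neg (mul_pos (by linarith) hA3) hA
        have t2 : μ * ((-(x - 1/2)) ^ 3)⁻¹ * (x - 1/2) < 0 :=
          mul_neg_of_pos_of_neg (mul_pos hμ0 hB3) hB
        linarith
      · exact absurd hA ha
      · rcases lt_trichotomy (x - 1/2) 0 with hB | hB | hB
        · rw [abs_of_pos hA, abs_of_neg hB] at h0'
          have hA0 : x + 1/2 ≠ 0 := ne_of_gt hA
          have hB0 : -(x - 1/2) ≠ 0 := ne_of_gt (by linarith)
          have key : (1 - μ) * (x - 1/2) ^ 2 = μ * (x + 1/2) ^ 2 := by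
            have h6 := congrArg (fun z : ℝ => z * ((x + 1/2) ^ 3 * (-(x - 1/2)) ^ 3)) h0'
            simp only [zero_mul] at h6
            have cA : ((x + 1/2) ^ 3)⁻¹ * (x + 1/2) ^ 3 = 1 :=
              inv_mul_cancel₀ (pow_ne_zero 3 hA0)
            have cB : ((-(x - 1/2)) ^ 3)⁻¹ * (-(x - 1/2)) ^ 3 = 1 :=
              inv_mul_cancel₀ (pow_ne_zero 3 hB0)
            have h7 : (1 - μ) * (x + 1/2) * (-(x - 1/2)) ^ 3
                + μ * (x - 1/2) * (x + 1/2) ^ 3 = 0 := by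
              linear_combination h6
                - ((1 - μ) * (x + 1/2) * (-(x - 1/2)) ^ 3) * cA
                - (μ * (x - 1/2) * (x + 1/2) ^ 3) * cB
            -- factor out (x+1/2) * (-(x-1/2)) > 0
            have hfac : ((x + 1/2) * (-(x - 1/2)))
                * ((1 - μ) * (x - 1/2) ^ 2) = ((x + 1/2) * (-(x - 1/2))) * (μ * (x + 1/2) ^ 2) := by
              linear_combination h7
            exact mul_left_cancel₀
              (mul_ne_zero hA0 hB0) hfac
          have key2 : (s * (-(x - 1/2)) - t * (x + 1/2))
              * (s * (-(x - 1/2)) + t * (x + 1/2)) = 0 := by nlinarith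
          have pos2 : 0 < s * (-(x - 1/2)) + t * (x + 1/2) := by nlinarith
          have key3 : s * (-(x - 1/2)) = t * (x + 1/2) := by
            rcases mul_eq_zero.mp key2 with h | h
            · linarith
            · linarith
          rw [hl', eq_div_iff (ne_of_gt (by positivity))]
          linear_combination (-2 : ℝ) * key3
        · exact absurd hB hb
        · exfalso
          rw [abs_of_pos hA, abs_of_pos hB] at h0'
          have hA3 : (0:ℝ) < ((x + 1/2) ^ 3)⁻¹ :=
            inv_pos.mpr (pow_pos (by linarith) 3)
          have hB3 : (0:ℝ) < ((x - 1/2) ^ 3)⁻¹ :=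
            inv_pos.mpr (pow_pos (by linarith) 3)
          have t1 : 0 < (1 - μ) * ((x + 1/2) ^ 3)⁻¹ * (x + 1/2) :=
            mul_pos (mul_pos (by linarith) hA3) hA
          have t2 : 0 < μ * ((x - 1/2) ^ 3)⁻¹ * (x - 1/2) :=
            mul_pos (mul_pos hμ0 hB3) hB
          linarith
    exact ⟨hp, eq_pt q l 0 hxl hy⟩
  · rintro ⟨hp, hq⟩
    subst hp
    have hx0 : q 0 = l := by rw [hq]; rfl
    have hy0 : q 1 = 0 := by rw [hq]; rfl
    have hapos : 0 < l + 1/2 := by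
      rw [hla]; exact div_pos hs0 (by linarith)
    have hbneg : l - 1/2 < 0 := by
      rw [hlb]
      have : 0 < t / (s + t) := div_pos ht0 (by linarith)
      linarith
    have hrE' : r1 = l + 1/2 := by
      rw [hr1_def, norm_sub_earth q hy0, hx0, abs_of_pos hapos]
    have hrM' : r2 = -(l - 1/2) := by
      rw [hr2_def, norm_sub_moon q hy0, hx0, abs_of_neg hbneg]
    have hst0 : (0:ℝ) < s + t := by linarith
    have hg0 : g = 0 := by
      rw [eq_zero_iff2]
      constructor
      · have hA : l - -(1/2:ℝ) = l + 1/2 := by ring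
        rw [hgapp 0, hE0, hM0, hx0, hrE', hrM', hA, hla, hlb, ← hs2, ← ht2]
        have h1 : s + t ≠ 0 := ne_of_gt hst0
        field_simp
        ring
      · rw [hgapp 1, hE1, hM1, hy0]
        ring
    rw [hg0]
    have h00 : innerSL ℝ (0 : EuclideanSpace ℝ (Fin 2)) = (0 : _) := by
      ext v; simp
    rw [h00]
    ext v <;> simp
end

section
/- For every mass ratio μ with 0 < μ < 1/2, setting l = (1 − 2√(μ(1−μ)))/(2(1−2μ)), the value of the Euler potential at the critical point (l, 0) is V_μ(l, 0) = −1 − 2√(μ(1−μ)); that is, the critical Jacobi energy equals c_J = −1 − 2√(μ(1−μ)). -/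
/-- The Euler potential V_μ(q) = -(1-μ)/‖q-E‖ - μ/‖q-M‖. -/
noncomputable def eulerPotential (μ : ℝ) (q : EuclideanSpace ℝ (Fin 2)) : ℝ :=
  -(1 - μ) / ‖q - Earth‖ - μ / ‖q - Moon‖

noncomputable def vec (a b : ℝ) : EuclideanSpace ℝ (Fin 2) := !₂[a, b]

lemma norm_pair (a : ℝ) : ‖vec a 0‖ = |a| := by
  rw [EuclideanSpace.norm_eq]
  simp [vec, Fin.sum_univ_two, Real.sqrt_sq_eq_abs]

/-- For 0 < μ < 1/2 and l = (1 - 2√(μ(1-μ)))/(2(1-2μ)), the value of the Euler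
potential at the critical point (l, 0) is the critical Jacobi energy
c_J = -1 - 2√(μ(1-μ)). -/
theorem euler_potential_critical_value (μ : ℝ) (hμ0 : 0 < μ) (hμ1 : μ < 1/2)
    (l : ℝ) (hl : l = (1 - 2 * Real.sqrt (μ * (1 - μ))) / (2 * (1 - 2 * μ))) :
    eulerPotential μ !₂[l, 0] = -1 - 2 * Real.sqrt (μ * (1 - μ)) := by
  set s := Real.sqrt (μ * (1 - μ)) with hs
  have hs0 : 0 ≤ s := Real.sqrt_nonneg _
  have hs2 : s ^ 2 = μ * (1 - μ) := Real.sq_sqrt (by nlinarith)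
  have hsμ : μ < s := by nlinarith
  have hshalf : s < 1/2 := by nlinarith
  have h2μ : 0 < 1 - 2 * μ := by linarith
  have hE : vec l 0 - Earth = vec (l + 1/2) 0 := by
    ext i; fin_cases i <;> simp [vec, Earth, Pi.sub_apply]
  have hM : vec l 0 - Moon = vec (l - 1/2) 0 := by
    ext i; fin_cases i <;> simp [vec, Moon, Pi.sub_apply]
  have hA : l + 1/2 = (1 - s - μ) / (1 - 2 * μ) := by
    rw [hl]; field_simp; ring
  have hB : l - 1/2 = -((s - μ) / (1 - 2 * μ)) := by
    rw [hl]; field_simp; ring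
  have hApos : 0 < l + 1/2 := by
    rw [hA]; apply div_pos <;> linarith
  have hBneg : l - 1/2 < 0 := by
    rw [hB]
    have : 0 < (s - μ) / (1 - 2 * μ) := by
      apply div_pos <;> linarith
    linarith
  show eulerPotential μ (vec l 0) = -1 - 2 * s
  rw [eulerPotential, hE, hM, norm_pair, norm_pair, abs_of_pos hApos,
    abs_of_neg hBneg, hA, hB]
  have h1 : 1 - s - μ ≠ 0 := by nlinarith
  have h2 : s - μ ≠ 0 := by nlinarith
  have h3 : (1 : ℝ) - 2 * μ ≠ 0 := by linarith
  field_simp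
  nlinarith [hs2, sq_nonneg s, sq_nonneg (1 - 2*μ)]
end

section
/- For every mass ratio μ with 0 < μ < 1/2, set l = (1 − 2√(μ(1−μ)))/(2(1−2μ)). At the critical point (l, 0) of the Euler potential V_μ, the second partial derivatives satisfy ∂²V_μ/∂q₁²(l,0) < 0, ∂²V_μ/∂q₂²(l,0) > 0, and ∂²V_μ/∂q₁∂q₂(l,0) = 0; in particular the Hessian of V_μ at (l,0) is nondegenerate and indefinite, so (l,0) is a saddle point of Morse index 1. -/
set_option maxHeartbeats 1000000


lemma norm_pair' (v : EuclideanSpace ℝ (Fin 2)) : ‖v‖ = Real.sqrt ((v 0)^2 + (v 1)^2) := by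
  rw [EuclideanSpace.norm_eq]
  simp [Fin.sum_univ_two, Real.norm_eq_abs, sq_abs]

lemma eulerPotential_eq (μ x y : ℝ) : eulerPotential μ !₂[x,y] =
    -(1-μ)/Real.sqrt ((x+1/2)^2+y^2) - μ/Real.sqrt ((x-1/2)^2+y^2) := by
  unfold eulerPotential
  rw [norm_pair', norm_pair']
  simp only [Earth, Moon, PiLp.sub_apply, Matrix.cons_val_zero, Matrix.cons_val_one,
    Matrix.head_cons, sub_neg_eq_add, sub_zero]

/-- first derivative building block for the vertical direction -/
lemma vert1 (k : ℝ) (hk : 0 < k) (c : ℝ) (y : ℝ) :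
    HasDerivAt (fun y : ℝ => c / Real.sqrt (k + y^2)) (-(c*y) / (Real.sqrt (k+y^2))^3) y := by
  have hky : 0 < k + y^2 := by positivity
  have hs : Real.sqrt (k + y^2) ≠ 0 := by positivity
  have h1 : HasDerivAt (fun y : ℝ => k + y^2) (2*y) y := by
    simpa using (hasDerivAt_pow 2 y).const_add k
  have h2 := h1.sqrt hky.ne'
  have h3 : HasDerivAt (fun y : ℝ => c / Real.sqrt (k + y^2)) _ y := (hasDerivAt_const y c).div h2 hs
  convert h3 using 1
  generalize Real.sqrt (k+y^2) = s at hs ⊢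
  field_simp
  ring

/-- second derivative building block for the vertical direction -/
lemma vert2 (k : ℝ) (hk : 0 < k) (c : ℝ) :
    HasDerivAt (fun y : ℝ => c * y / (Real.sqrt (k + y^2))^3) (c / (Real.sqrt k)^3) 0 := by
  have hky : (0:ℝ) < k + 0^2 := by positivity
  have hs : Real.sqrt (k + 0^2) ≠ 0 := by positivity
  have h1 : HasDerivAt (fun y : ℝ => k + y^2) (2*0) 0 := by
    simpa using (hasDerivAt_pow 2 (0:ℝ)).const_add k
  have h2 := (h1.sqrt hky.ne').pow 3
  have hD : (Real.sqrt (k + 0^2))^3 ≠ 0 := by positivity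
  have h3 : HasDerivAt (fun y : ℝ => c * y) c 0 := by
    simpa using (hasDerivAt_id (0:ℝ)).const_mul c
  have h4 : HasDerivAt (fun y : ℝ => c * y / (Real.sqrt (k + y^2))^3) _ 0 := h3.div h2 hD
  convert h4 using 1
  rw [show (0:ℝ)^2 = 0 by norm_num, add_zero] at hs ⊢
  field_simp
  ring

/-- At the critical point (l, 0) of the Euler potential V_μ (where 0 < μ < 1/2 and
l = (1 - 2√(μ(1-μ)))/(2(1-2μ))) one has ∂²V/∂q₁² < 0, ∂²V/∂q₂² > 0 and
∂²V/∂q₁∂q₂ = 0; in particular the Hessian is nondegenerate and indefinite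
(its determinant is negative), so (l,0) is a saddle point of Morse index 1. -/
theorem euler_potential_hessian_saddle (μ : ℝ) (hμ0 : 0 < μ) (hμ1 : μ < 1/2)
    (l : ℝ) (hl : l = (1 - 2 * Real.sqrt (μ * (1 - μ))) / (2 * (1 - 2 * μ))) :
    deriv (deriv (fun x : ℝ => eulerPotential μ !₂[x, 0])) l < 0 ∧
    deriv (deriv (fun y : ℝ => eulerPotential μ !₂[l, y])) 0 > 0 ∧
    deriv (fun x : ℝ => deriv (fun y : ℝ => eulerPotential μ !₂[x, y]) 0) l = 0 ∧
    deriv (deriv (fun x : ℝ => eulerPotential μ !₂[x, 0])) l *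
        deriv (deriv (fun y : ℝ => eulerPotential μ !₂[l, y])) 0 -
      (deriv (fun x : ℝ => deriv (fun y : ℝ => eulerPotential μ !₂[x, y]) 0) l) ^ 2 < 0 := by
  have hμ1' : 0 < 1 - μ := by linarith
  have hd : 0 < 1 - 2*μ := by linarith
  set s := Real.sqrt (μ * (1 - μ)) with hsdef
  have hs2 : s^2 = μ * (1 - μ) := Real.sq_sqrt (by nlinarith)
  have hsnn : 0 ≤ s := Real.sqrt_nonneg _
  have hsμ : μ < s := by nlinarith
  have hs1 : s < 1 - μ := by nlinarith
  have hld : l * (2*(1 - 2*μ)) = 1 - 2*s := by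
    rw [hl]; field_simp
  have ha : 0 < l + 1/2 := by nlinarith
  have hb : 0 < 1/2 - l := by nlinarith
  -- the horizontal restriction
  set A : ℝ → ℝ := fun x => -(1-μ)/(x+1/2) - μ/(1/2-x) with hAdef
  set A' : ℝ → ℝ := fun x => (1-μ)/(x+1/2)^2 - μ/(1/2-x)^2 with hA'def
  have hmem : Set.Ioo (-(1/2):ℝ) (1/2) ∈ nhds l :=
    Ioo_mem_nhds (by linarith) (by linarith)
  have hAeq : (fun x : ℝ => eulerPotential μ !₂[x, 0]) =ᶠ[nhds l] A := by
    filter_upwards [hmem] with x hx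
    have hx1 : 0 < x + 1/2 := by have := hx.1; linarith
    have hx2 : x - 1/2 < 0 := by have := hx.2; linarith
    rw [eulerPotential_eq, hAdef]
    rw [show (x+1/2)^2 + 0^2 = (x+1/2)^2 by ring, show (x-1/2)^2 + 0^2 = (x-1/2)^2 by ring,
      Real.sqrt_sq hx1.le, Real.sqrt_sq_eq_abs, abs_of_neg hx2]
    ring
  have hA'at : ∀ x ∈ Set.Ioo (-(1/2):ℝ) (1/2), HasDerivAt A (A' x) x := by
    intro x hx
    have hx1' : (0:ℝ) < x + 1/2 := by have := hx.1; linarith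
    have hx2' : (0:ℝ) < 1/2 - x := by have := hx.2; linarith
    have h1 : HasDerivAt (fun x : ℝ => x + 1/2) 1 x := (hasDerivAt_id x).add_const _
    have h2 : HasDerivAt (fun x : ℝ => 1/2 - x) (-1) x := (hasDerivAt_id x).const_sub _
    have h3 : HasDerivAt A _ x := ((hasDerivAt_const x (-(1-μ))).div h1 hx1'.ne').sub
      ((hasDerivAt_const x μ).div h2 hx2'.ne')
    convert h3 using 1
    simp only [hA'def]
    ring
  have hA'eq : deriv A =ᶠ[nhds l] A' := by
    filter_upwards [hmem] with x hx
    exact (hA'at x hx).deriv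
  have hlIoo : l ∈ Set.Ioo (-(1/2):ℝ) (1/2) := ⟨by linarith, by linarith⟩
  have hA''at : HasDerivAt A' (-(2*(1-μ))/(l+1/2)^3 - 2*μ/(1/2-l)^3) l := by
    have h1 : HasDerivAt (fun x : ℝ => (x+1/2)^2) (2*(l+1/2)^1*1) l :=
      ((hasDerivAt_id l).add_const _).pow 2
    have h2 : HasDerivAt (fun x : ℝ => (1/2-x)^2) (2*(1/2-l)^1*(-1)) l :=
      ((hasDerivAt_id l).const_sub _).pow 2
    have h3 := ((hasDerivAt_const l (1-μ)).div h1 (by positivity)).sub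
      ((hasDerivAt_const l μ).div h2 (by positivity))
    have key : ∀ u v : ℝ, u ≠ 0 → v ≠ 0 →
        -(2*(1-μ))/u^3 - 2*μ/v^3
          = (0*u^2 - (1-μ)*(2*u^1*1))/(u^2)^2 - (0*v^2 - μ*(2*v^1*(-1)))/(v^2)^2 := by
      intro u v hu hv
      field_simp
      ring
    rw [key (l+1/2) (1/2-l) ha.ne' hb.ne']
    exact h3
  have H1 : deriv (deriv (fun x : ℝ => eulerPotential μ !₂[x, 0])) l
      = -(2*(1-μ))/(l+1/2)^3 - 2*μ/(1/2-l)^3 := by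
    rw [hAeq.deriv.deriv_eq, hA'eq.deriv_eq, hA''at.deriv]
  have h1neg : deriv (deriv (fun x : ℝ => eulerPotential μ !₂[x, 0])) l < 0 := by
    rw [H1]
    have t1 : 0 < 2*(1-μ)/(l+1/2)^3 := by positivity
    have t2 : 0 < 2*μ/(1/2-l)^3 := by positivity
    have : -(2*(1-μ))/(l+1/2)^3 = -(2*(1-μ)/(l+1/2)^3) := by ring
    rw [this]
    linarith
  -- the vertical restriction
  have hk1 : (0:ℝ) < (l+1/2)^2 := by positivity
  have hk2 : (0:ℝ) < (l-1/2)^2 := by nlinarith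
  set B : ℝ → ℝ := fun y => -(1-μ)/Real.sqrt ((l+1/2)^2+y^2) - μ/Real.sqrt ((l-1/2)^2+y^2)
    with hBdef
  set B' : ℝ → ℝ := fun y => (1-μ)*y/(Real.sqrt ((l+1/2)^2+y^2))^3
    + μ*y/(Real.sqrt ((l-1/2)^2+y^2))^3 with hB'def
  have hfB : (fun y : ℝ => eulerPotential μ !₂[l, y]) = B := by
    funext y; rw [eulerPotential_eq, hBdef]
  have hBat : ∀ y : ℝ, HasDerivAt B (B' y) y := by
    intro y
    have h3 : HasDerivAt B _ y := (vert1 _ hk1 (-(1-μ)) y).sub (vert1 _ hk2 μ y)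
    convert h3 using 1
    simp only [hB'def]
    ring
  have hderivB : deriv B = B' := funext fun y => (hBat y).deriv
  have hB'at : HasDerivAt B' ((1-μ)/(Real.sqrt ((l+1/2)^2))^3 + μ/(Real.sqrt ((l-1/2)^2))^3)
      0 := (vert2 _ hk1 (1-μ)).add (vert2 _ hk2 μ)
  have H2 : deriv (deriv (fun y : ℝ => eulerPotential μ !₂[l, y])) 0
      = (1-μ)/(l+1/2)^3 + μ/(1/2-l)^3 := by
    rw [hfB, hderivB, hB'at.deriv, Real.sqrt_sq ha.le, Real.sqrt_sq_eq_abs,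
      abs_of_neg (by linarith : l - 1/2 < 0)]
    ring_nf
  have h2pos : deriv (deriv (fun y : ℝ => eulerPotential μ !₂[l, y])) 0 > 0 := by
    rw [H2]
    have t1 : 0 < (1-μ)/(l+1/2)^3 := by positivity
    have t2 : 0 < μ/(1/2-l)^3 := by positivity
    linarith
  -- the mixed partial
  have hodd : ∀ x : ℝ, deriv (fun y : ℝ => eulerPotential μ !₂[x, y]) 0 = 0 := by
    intro x
    set G : ℝ → ℝ := fun y => eulerPotential μ !₂[x, y] with hGdef
    have hev : (fun y : ℝ => G (-y)) = G := by
      funext y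
      rw [hGdef]
      simp only [eulerPotential_eq, neg_sq]
    have h1 : deriv G 0 = -deriv G 0 := by
      conv_lhs => rw [← hev]
      rw [deriv_comp_neg, neg_zero]
    linarith
  have H3 : deriv (fun x : ℝ => deriv (fun y : ℝ => eulerPotential μ !₂[x, y]) 0) l = 0 := by
    have : (fun x : ℝ => deriv (fun y : ℝ => eulerPotential μ !₂[x, y]) 0) = fun _ => (0:ℝ) :=
      funext hodd
    rw [this, deriv_const]
  refine ⟨h1neg, h2pos, H3, ?_⟩
  rw [H3]
  nlinarith [mul_neg_of_neg_of_pos h1neg h2pos]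
end
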